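/- For every n ≥ 2 and every k with 0 ≤ k ≤ n−3, f_n(k, n−1) = ∑_{k'=k}^{n−2} f_{n−1}(k', n−2). -/

import Mathlib

/-- `e : Fin n → ℕ` is an inversion sequence: `e i ≤ i` (0-indexed). -/
def IsInvSeq {n : ℕ} (e : Fin n → ℕ) : Prop := ∀ i : Fin n, e i ≤ (i : ℕ)

/-- `e` avoids the pattern 0012: there are no indices `i < j < k < l`
with `e i = e j < e k < e l`. -/
def Avoids0012 {n : ℕ} (e : Fin n → ℕ) : Prop :=
  ¬ ∃ i j k l : Fin n, i < j ∧ j < k ∧ k < l ∧ e i = e j ∧ e j < e k ∧ e k < e l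

/-- The set `I_n(0012)` of inversion sequences of length `n` avoiding `0012`. -/
def InvSeq0012 (n : ℕ) : Set (Fin n → ℕ) := {e | IsInvSeq e ∧ Avoids0012 e}

/-- `R(e)`: the set of values appearing more than once in `e`. -/
def repeats {n : ℕ} (e : Fin n → ℕ) : Set ℕ :=
  {m | ∃ i j : Fin n, i ≠ j ∧ e i = m ∧ e j = m}

open Classical in
/-- `srpt e = min R(e)` if `R(e) ≠ ∅`, and `n - 1` otherwise. -/
noncomputable def srpt {n : ℕ} (e : Fin n → ℕ) : ℕ :=
  if (repeats e).Nonempty then sInf (repeats e) else n - 1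

/-- The last entry of `e` (and `0` for the empty sequence). -/
def lastEntry {n : ℕ} (e : Fin n → ℕ) : ℕ :=
  if h : 0 < n then e ⟨n - 1, by omega⟩ else 0

/-- `γ(e)`: the sequence `e` with its last entry removed. -/
def gammaSeq {n : ℕ} (e : Fin n → ℕ) : Fin (n - 1) → ℕ :=
  fun i => e (Fin.castLE (Nat.sub_le n 1) i)

/-- `f n k ℓ`: the number of `e ∈ I_n(0012)` with `srpt e = k` and `last e = ℓ`. -/
noncomputable def f (n k ℓ : ℕ) : ℕ :=
  Set.ncard {e : Fin n → ℕ | e ∈ InvSeq0012 n ∧ srpt e = k ∧ lastEntry e = ℓ}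

def Av001 {m : ℕ} (g : Fin m → ℕ) : Prop :=
  ¬ ∃ i j l : Fin m, i < j ∧ j < l ∧ g i = g j ∧ g j < g l

lemma av001_base {m : ℕ} {g : Fin m → ℕ} (hav : Av001 g) {i j l : Fin m}
    (hij : i < j) (hjl : j < l) (hvv : g i = g j) : g l ≤ g j := by
  by_contra h
  exact hav ⟨i, j, l, hij, hjl, hvv, by omega⟩

lemma selfpos_aux {m : ℕ} {g : Fin m → ℕ} (hinv : ∀ i : Fin m, g i ≤ (i : ℕ))
    (hav : Av001 g) :
    ∀ N : ℕ, ∀ i : Fin m, (i : ℕ) ≤ N → ∀ hv : g i < m, g ⟨g i, hv⟩ = g i := by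
  intro N
  induction N with
  | zero =>
    intro i hi hv
    have h0 : g i = (i : ℕ) := by have := hinv i; omega
    have : (⟨g i, hv⟩ : Fin m) = i := Fin.ext h0
    rw [this]
  | succ N IH =>
    intro i hi hv
    by_cases h : g i = (i : ℕ)
    · have : (⟨g i, hv⟩ : Fin m) = i := Fin.ext h
      rw [this]
    · have hlt : g i < (i : ℕ) := lt_of_le_of_ne (hinv i) h
      have hvm : g ⟨g i, hv⟩ < m := lt_of_le_of_lt (hinv _) hv
      have IH1 := IH ⟨g i, hv⟩ (by simp; omega) hvm
      by_cases h2 : g ⟨g i, hv⟩ = g i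
      · exact h2
      · exfalso
        have hw : g ⟨g i, hv⟩ < g i := lt_of_le_of_ne (hinv ⟨g i, hv⟩) h2
        have hb := av001_base hav (i := ⟨g ⟨g i, hv⟩, hvm⟩) (j := ⟨g i, hv⟩) (l := i)
          (by simp [Fin.lt_def]; omega) (by simp [Fin.lt_def]; omega) IH1
        omega

lemma selfpos {m : ℕ} {g : Fin m → ℕ} (hinv : ∀ i : Fin m, g i ≤ (i : ℕ))
    (hav : Av001 g) (i : Fin m) (hv : g i < m) : g ⟨g i, hv⟩ = g i :=
  selfpos_aux hinv hav (i : ℕ) i le_rfl hv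

lemma selfpos_val {m : ℕ} {g : Fin m → ℕ} (hinv : ∀ i : Fin m, g i ≤ (i : ℕ))
    (hav : Av001 g) {j : Fin m} {v : ℕ} (h : g j = v) (hv : v < m) :
    g ⟨v, hv⟩ = v := by subst h; exact selfpos hinv hav j hv

lemma av001_decr {m : ℕ} {g : Fin m → ℕ} (hinv : ∀ i : Fin m, g i ≤ (i : ℕ))
    (hav : Av001 g) {i j : Fin m} (hij : i < j) (hgi : g i < (i : ℕ)) : g j ≤ g i := by
  have hvm : g i < m := lt_of_le_of_lt (hinv i) i.isLt
  exact av001_base hav (i := ⟨g i, hvm⟩) (hij := by simp [Fin.lt_def]; omega) (hjl := hij)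
    (selfpos hinv hav i hvm)

lemma repeats_iff {m : ℕ} {g : Fin m → ℕ} (hinv : ∀ i : Fin m, g i ≤ (i : ℕ))
    (hav : Av001 g) {v : ℕ} :
    v ∈ repeats g ↔ ∃ j : Fin m, g j = v ∧ v < (j : ℕ) := by
  constructor
  · rintro ⟨i, j, hne, hi, hj⟩
    rcases lt_or_gt_of_ne hne with h | h
    · exact ⟨j, hj, by have h1 := hinv i; have h2 : (i:ℕ) < (j:ℕ) := h; omega⟩
    · exact ⟨i, hi, by have h1 := hinv j; have h2 : (j:ℕ) < (i:ℕ) := h; omega⟩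
  · rintro ⟨j, hj, hv⟩
    refine ⟨⟨v, lt_trans hv j.isLt⟩, j, ?_, ?_, hj⟩
    · intro hc
      have : v = (j : ℕ) := congrArg Fin.val hc
      omega
    · exact selfpos_val hinv hav hj _

lemma last_mem_repeats {m : ℕ} {g : Fin m → ℕ} (hinv : ∀ i : Fin m, g i ≤ (i : ℕ))
    (hav : Av001 g) (hm : 0 < m) (hne : (repeats g).Nonempty) :
    sInf (repeats g) = g ⟨m - 1, by omega⟩ := by
  obtain ⟨v, hv⟩ := hne
  obtain ⟨j, hj, hvj⟩ := (repeats_iff hinv hav).1 hv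
  have hjm : (j : ℕ) ≤ m - 1 := by have := j.isLt; omega
  have hlast : g ⟨m - 1, by omega⟩ < m - 1 := by
    rcases eq_or_lt_of_le hjm with h | h
    · have : j = (⟨m - 1, by omega⟩ : Fin m) := Fin.ext h
      rw [← this, hj]; omega
    · have := av001_decr hinv hav (i := j) (j := ⟨m - 1, by omega⟩)
        (by simp [Fin.lt_def]; omega) (by omega)
      omega
  have hmem : g ⟨m - 1, by omega⟩ ∈ repeats g :=
    (repeats_iff hinv hav).2 ⟨⟨m - 1, by omega⟩, rfl, by simpa using hlast⟩
  refine le_antisymm (Nat.sInf_le hmem) (le_csInf ⟨v, hv⟩ ?_)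
  intro w hw
  obtain ⟨i, hiw, hwi⟩ := (repeats_iff hinv hav).1 hw
  have him : (i : ℕ) ≤ m - 1 := by have := i.isLt; omega
  rcases eq_or_lt_of_le him with h | h
  · have : i = (⟨m - 1, by omega⟩ : Fin m) := Fin.ext h
    rw [← this, hiw]
  · have := av001_decr hinv hav (i := i) (j := ⟨m - 1, by omega⟩)
      (by simp [Fin.lt_def]; omega) (by omega)
    omega

lemma id_of_no_repeats {m : ℕ} {g : Fin m → ℕ} (hinv : ∀ i : Fin m, g i ≤ (i : ℕ))
    (hav : Av001 g) (h : ¬ (repeats g).Nonempty) (i : Fin m) : g i = (i : ℕ) := by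
  by_contra hne
  exact h ⟨g i, (repeats_iff hinv hav).2 ⟨i, rfl, lt_of_le_of_ne (hinv i) hne⟩⟩

lemma prefix_id {m : ℕ} {g : Fin m → ℕ} (hinv : ∀ i : Fin m, g i ≤ (i : ℕ))
    (hav : Av001 g) {v : ℕ} (hvr : v ≤ sInf (repeats g)) (hv : v < m) :
    g ⟨v, hv⟩ = v := by
  by_contra h
  have hle : g ⟨v, hv⟩ ≤ v := hinv ⟨v, hv⟩
  have hlt : g ⟨v, hv⟩ < v := lt_of_le_of_ne hle h
  have hmem : g ⟨v, hv⟩ ∈ repeats g :=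
    (repeats_iff hinv hav).2 ⟨⟨v, hv⟩, rfl, by simpa using hlt⟩
  have := Nat.sInf_le hmem
  omega

lemma gammaSeq_apply {n : ℕ} (e : Fin n → ℕ) (i : Fin (n-1)) (h : (i : ℕ) < n) :
    gammaSeq e i = e ⟨i, h⟩ := rfl

lemma avoids_iff_gamma {m : ℕ} (hm : 0 < m) (e : Fin m → ℕ) (hinv : IsInvSeq e)
    (hlast : e ⟨m - 1, by omega⟩ = m - 1) :
    Avoids0012 e ↔ Av001 (gammaSeq e) := by
  constructor
  · intro hav hpat
    obtain ⟨i, j, l, hij, hjl, hvv, hlt⟩ := hpat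
    apply hav
    have hi : (i : ℕ) < m := lt_of_lt_of_le i.isLt (Nat.sub_le m 1)
    have hj : (j : ℕ) < m := lt_of_lt_of_le j.isLt (Nat.sub_le m 1)
    have hl : (l : ℕ) < m := lt_of_lt_of_le l.isLt (Nat.sub_le m 1)
    refine ⟨⟨i, hi⟩, ⟨j, hj⟩, ⟨l, hl⟩, ⟨m - 1, by omega⟩, ?_, ?_, ?_, hvv, hlt, ?_⟩
    · exact hij
    · exact hjl
    · exact Fin.mk_lt_mk.2 l.isLt
    · rw [hlast]
      have h1 : e (⟨(l : ℕ), hl⟩ : Fin m) ≤ (l : ℕ) := hinv _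
      have := l.isLt
      omega
  · intro hav hpat
    obtain ⟨i, j, kk, l, hij, hjk, hkl, hvv, hlt, _⟩ := hpat
    apply hav
    have hlm : (l : ℕ) ≤ m - 1 := by have := l.isLt; omega
    have hk' : (kk : ℕ) < m - 1 := by have : (kk : ℕ) < (l : ℕ) := hkl; omega
    have hj' : (j : ℕ) < m - 1 := by have : (j : ℕ) < (kk : ℕ) := hjk; omega
    have hi' : (i : ℕ) < m - 1 := by have : (i : ℕ) < (j : ℕ) := hij; omega
    refine ⟨⟨i, hi'⟩, ⟨j, hj'⟩, ⟨kk, hk'⟩, hij, hjk, ?_, ?_⟩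
    · show e (Fin.castLE _ _) = e (Fin.castLE _ _)
      have h1 : Fin.castLE (Nat.sub_le m 1) (⟨(i : ℕ), hi'⟩ : Fin (m-1)) = i := Fin.ext rfl
      have h2 : Fin.castLE (Nat.sub_le m 1) (⟨(j : ℕ), hj'⟩ : Fin (m-1)) = j := Fin.ext rfl
      rw [h1, h2]; exact hvv
    · show e (Fin.castLE _ _) < e (Fin.castLE _ _)
      have h2 : Fin.castLE (Nat.sub_le m 1) (⟨(j : ℕ), hj'⟩ : Fin (m-1)) = j := Fin.ext rfl
      have h3 : Fin.castLE (Nat.sub_le m 1) (⟨(kk : ℕ), hk'⟩ : Fin (m-1)) = kk := Fin.ext rfl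
      rw [h2, h3]; exact hlt

lemma repeats_gamma {m : ℕ} (hm : 0 < m) (e : Fin m → ℕ) (hinv : IsInvSeq e)
    (hlast : e ⟨m - 1, by omega⟩ = m - 1) :
    repeats e = repeats (gammaSeq e) := by
  ext v
  constructor
  · rintro ⟨i, j, hne, hi, hj⟩
    have key : ∀ a b : Fin m, a ≠ b → e a = v → e b = v → (a : ℕ) < m - 1 := by
      intro a b hab ha hb
      by_contra hc
      have ha' : (a : ℕ) = m - 1 := by have := a.isLt; omega
      have hae : a = (⟨m - 1, by omega⟩ : Fin m) := Fin.ext ha'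
      have hv1 : v = m - 1 := by rw [← ha, hae, hlast]
      have hb' : (b : ℕ) ≠ m - 1 := by
        intro hc2
        exact hab (Fin.ext (by omega) : a = b)
      have : e b ≤ (b : ℕ) := hinv b
      have := b.isLt
      omega
    have hi' : (i : ℕ) < m - 1 := key i j hne hi hj
    have hj' : (j : ℕ) < m - 1 := key j i (Ne.symm hne) hj hi
    refine ⟨⟨i, hi'⟩, ⟨j, hj'⟩, ?_, ?_, ?_⟩
    · intro hc
      have hval : (i : ℕ) = (j : ℕ) := by simpa [Fin.ext_iff] using hc
      exact hne (Fin.ext hval)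
    · show e (Fin.castLE _ _) = v
      have h1 : Fin.castLE (Nat.sub_le m 1) (⟨(i : ℕ), hi'⟩ : Fin (m-1)) = i := Fin.ext rfl
      rw [h1]; exact hi
    · show e (Fin.castLE _ _) = v
      have h2 : Fin.castLE (Nat.sub_le m 1) (⟨(j : ℕ), hj'⟩ : Fin (m-1)) = j := Fin.ext rfl
      rw [h2]; exact hj
  · rintro ⟨i, j, hne, hi, hj⟩
    refine ⟨Fin.castLE (Nat.sub_le m 1) i, Fin.castLE (Nat.sub_le m 1) j, ?_, hi, hj⟩
    intro hc
    have hval : (i : ℕ) = (j : ℕ) := by simpa [Fin.ext_iff] using hc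
    exact hne (Fin.ext hval)

lemma av001_gamma {m : ℕ} {g : Fin m → ℕ} (hav : Av001 g) : Av001 (gammaSeq g) := by
  rintro ⟨i, j, l, hij, hjl, hvv, hlt⟩
  exact hav ⟨Fin.castLE (Nat.sub_le m 1) i, Fin.castLE (Nat.sub_le m 1) j,
    Fin.castLE (Nat.sub_le m 1) l, hij, hjl, hvv, hlt⟩

lemma repeats_gamma_subset {m : ℕ} (g : Fin m → ℕ) :
    repeats (gammaSeq g) ⊆ repeats g := by
  rintro v ⟨i, j, hne, hi, hj⟩
  exact ⟨Fin.castLE (Nat.sub_le m 1) i, Fin.castLE (Nat.sub_le m 1) j,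
    fun hc => hne (Fin.ext (by simpa [Fin.ext_iff] using hc : (i:ℕ) = (j:ℕ))), hi, hj⟩


lemma srpt_eq_sInf {n : ℕ} (e : Fin n → ℕ) (h : (repeats e).Nonempty) :
    srpt e = sInf (repeats e) := by
  unfold srpt; rw [if_pos h]

lemma srpt_eq_of_not {n : ℕ} (e : Fin n → ℕ) (h : ¬ (repeats e).Nonempty) :
    srpt e = n - 1 := by
  unfold srpt; rw [if_neg h]

lemma lastEntry_eq {n : ℕ} (hn : 0 < n) (e : Fin n → ℕ) :
    lastEntry e = e ⟨n - 1, by omega⟩ := by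
  unfold lastEntry; rw [dif_pos hn]

lemma ginv_of_inv {n : ℕ} {e : Fin n → ℕ} (hinv : IsInvSeq e) :
    ∀ i : Fin (n - 1), gammaSeq e i ≤ (i : ℕ) := fun i => by
  have := hinv (Fin.castLE (Nat.sub_le n 1) i)
  simpa [gammaSeq] using this

def phiMap (n : ℕ) (e : Fin n → ℕ) : Fin (n - 1) → ℕ :=
  fun i => if (i : ℕ) = n - 2 then n - 2 else e (Fin.castLE (Nat.sub_le n 1) i)

lemma finite_inv (m : ℕ) : {e : Fin m → ℕ | IsInvSeq e}.Finite := by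
  have hsub : {e : Fin m → ℕ | IsInvSeq e} ⊆ Set.pi Set.univ (fun i => Set.Iic (i : ℕ)) := by
    intro e he i _; exact he i
  exact Set.Finite.subset (Set.Finite.pi fun i => Set.finite_Iic _) hsub

lemma lemA {n k : ℕ} (hk : k + 3 ≤ n) (e : Fin n → ℕ) (hinv : IsInvSeq e)
    (hav : Avoids0012 e) (hs : srpt e = k) (hl : lastEntry e = n - 1) :
    Av001 (gammaSeq e) ∧ (repeats (gammaSeq e)).Nonempty ∧
      sInf (repeats (gammaSeq e)) = k ∧ e ⟨n - 2, by omega⟩ = k := by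
  have hn : 0 < n := by omega
  have hlast : e ⟨n - 1, by omega⟩ = n - 1 := by rw [← lastEntry_eq hn e]; exact hl
  have hgav : Av001 (gammaSeq e) := (avoids_iff_gamma hn e hinv hlast).1 hav
  have hginv := ginv_of_inv hinv
  have hrep : repeats e = repeats (gammaSeq e) := repeats_gamma hn e hinv hlast
  have hne : (repeats (gammaSeq e)).Nonempty := by
    by_contra h
    have h2 : ¬ (repeats e).Nonempty := by rw [hrep]; exact h
    have := srpt_eq_of_not e h2
    omega
  have hsinf : sInf (repeats (gammaSeq e)) = k := by
    have h1 := srpt_eq_sInf e (by rw [hrep]; exact hne)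
    rw [hrep] at h1; omega
  refine ⟨hgav, hne, hsinf, ?_⟩
  have h2 := last_mem_repeats hginv hgav (by omega : 0 < n - 1) hne
  have h3 : gammaSeq e ⟨n - 1 - 1, by omega⟩ = e ⟨n - 2, by omega⟩ := rfl
  rw [h3] at h2
  omega

lemma lemFwd {n k : ℕ} (hk : k + 3 ≤ n) (e : Fin n → ℕ) (hinv : IsInvSeq e)
    (hav : Avoids0012 e) (hs : srpt e = k) (hl : lastEntry e = n - 1) :
    IsInvSeq (phiMap n e) ∧ Avoids0012 (phiMap n e) ∧
      lastEntry (phiMap n e) = n - 2 ∧ srpt (phiMap n e) ∈ Finset.Icc k (n - 2) := by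
  obtain ⟨hgav, hne, hsinf, hmid⟩ := lemA hk e hinv hav hs hl
  have hn : 0 < n := by omega
  have hm : 0 < n - 1 := by omega
  have hΦinv : IsInvSeq (phiMap n e) := by
    intro i
    unfold phiMap
    by_cases h : (i : ℕ) = n - 2
    · rw [if_pos h]; omega
    · rw [if_neg h]
      have := hinv (Fin.castLE (Nat.sub_le n 1) i)
      simpa using this
  have hΦlast : phiMap n e ⟨n - 1 - 1, by omega⟩ = n - 1 - 1 := by
    unfold phiMap
    have hc : ((⟨n - 1 - 1, by omega⟩ : Fin (n - 1)) : ℕ) = n - 2 := rfl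
    rw [if_pos hc]
    omega
  have hgh : gammaSeq (phiMap n e) = gammaSeq (gammaSeq e) := by
    funext i
    show phiMap n e (Fin.castLE _ i) = gammaSeq e (Fin.castLE _ i)
    unfold phiMap
    rw [if_neg (by have := i.isLt; simp <;> omega)]
    rfl
  have hhav : Av001 (gammaSeq (phiMap n e)) := by
    rw [hgh]; exact av001_gamma hgav
  have hΦav : Avoids0012 (phiMap n e) :=
    (avoids_iff_gamma hm (phiMap n e) hΦinv hΦlast).2 hhav
  have hΦrep : repeats (phiMap n e) = repeats (gammaSeq (phiMap n e)) :=
    repeats_gamma hm (phiMap n e) hΦinv hΦlast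
  refine ⟨hΦinv, hΦav, ?_, ?_⟩
  · rw [lastEntry_eq hm, hΦlast]; omega
  · rw [Finset.mem_Icc]
    by_cases hcase : (repeats (gammaSeq (phiMap n e))).Nonempty
    · have h1 : srpt (phiMap n e) = sInf (repeats (gammaSeq (phiMap n e))) := by
        rw [srpt_eq_sInf _ (by rw [hΦrep]; exact hcase), hΦrep]
      constructor
      · rw [h1]
        refine le_csInf hcase ?_
        intro v hv
        have hv2 : v ∈ repeats (gammaSeq e) := by
          rw [hgh] at hv; exact repeats_gamma_subset _ hv
        have := Nat.sInf_le hv2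
        omega
      · obtain ⟨v, hv⟩ := hcase
        have hhinv : ∀ i : Fin (n - 1 - 1), gammaSeq (phiMap n e) i ≤ (i : ℕ) :=
          ginv_of_inv hΦinv
        obtain ⟨j, hj, hvj⟩ := (repeats_iff hhinv hhav).1 hv
        have hjm := j.isLt
        have h2 := Nat.sInf_le hv
        rw [h1]; omega
    · have := srpt_eq_of_not (phiMap n e) (by rw [hΦrep]; exact hcase)
      omega


def psiMap (n k : ℕ) (e' : Fin (n - 1) → ℕ) : Fin n → ℕ := fun i =>
  if h1 : (i : ℕ) = n - 1 then n - 1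
  else if (i : ℕ) = n - 2 then k
  else e' ⟨(i : ℕ), by have := i.isLt; omega⟩

lemma psi_last {n k : ℕ} (hn : 0 < n) (e' : Fin (n - 1) → ℕ) :
    psiMap n k e' ⟨n - 1, by omega⟩ = n - 1 := by
  unfold psiMap
  rw [dif_pos rfl]

lemma psi_mid {n k : ℕ} (hn : 3 ≤ n) (e' : Fin (n - 1) → ℕ) :
    psiMap n k e' ⟨n - 2, by omega⟩ = k := by
  unfold psiMap
  rw [dif_neg (by simp <;> omega), if_pos rfl]

lemma psi_lo {n k : ℕ} (e' : Fin (n - 1) → ℕ) (i : Fin n) (hi : (i : ℕ) < n - 2) :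
    psiMap n k e' i = e' ⟨(i : ℕ), by omega⟩ := by
  unfold psiMap
  have h := i.isLt
  rw [dif_neg (by omega), if_neg (by omega)]

lemma psi_isinv {n k : ℕ} (hk : k + 3 ≤ n) (e' : Fin (n - 1) → ℕ) (hinv : IsInvSeq e') :
    IsInvSeq (psiMap n k e') := by
  intro i
  unfold psiMap
  by_cases h1 : (i : ℕ) = n - 1
  · rw [dif_pos h1]; omega
  · rw [dif_neg h1]
    by_cases h2 : (i : ℕ) = n - 2
    · rw [if_pos h2]; omega
    · rw [if_neg h2]
      have h3 := hinv ⟨(i : ℕ), by have := i.isLt; omega⟩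
      simpa using h3

attribute [irreducible] psiMap

set_option maxHeartbeats 1000000 in
lemma lemSurj {n k : ℕ} (hk : k + 3 ≤ n) (e' : Fin (n - 1) → ℕ) (hinv : IsInvSeq e')
    (hav : Avoids0012 e') (hl : lastEntry e' = n - 2) (hs1 : k ≤ srpt e')
    (hs2 : srpt e' ≤ n - 2) :
    ∃ E : Fin n → ℕ, IsInvSeq E ∧ Avoids0012 E ∧ srpt E = k ∧ lastEntry E = n - 1 ∧
      phiMap n E = e' := by
  have hn : 0 < n := by omega
  have hn3 : 3 ≤ n := by omega
  have hm : 0 < n - 1 := by omega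
  have hEinv : IsInvSeq (psiMap n k e') := psi_isinv hk e' hinv
  have hElastv : psiMap n k e' ⟨n - 1, by omega⟩ = n - 1 := psi_last hn e'
  have hElast : lastEntry (psiMap n k e') = n - 1 := by rw [lastEntry_eq hn, hElastv]
  have hg2 : gammaSeq (psiMap n k e') ⟨n - 2, by omega⟩ = k := by
    show psiMap n k e' (Fin.castLE _ _) = k
    have hc : Fin.castLE (Nat.sub_le n 1) (⟨n - 2, by omega⟩ : Fin (n - 1)) =
        (⟨n - 2, by omega⟩ : Fin n) := Fin.ext rfl
    rw [hc]
    exact psi_mid hn3 e'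
  have hginv : ∀ i : Fin (n - 1), gammaSeq (psiMap n k e') i ≤ (i : ℕ) := ginv_of_inv hEinv
  have hlast' : e' ⟨n - 1 - 1, by omega⟩ = n - 1 - 1 := by
    rw [lastEntry_eq hm] at hl; omega
  have hhav : Av001 (gammaSeq e') := (avoids_iff_gamma hm e' hinv hlast').1 hav
  have hhinv : ∀ i : Fin (n - 1 - 1), gammaSeq e' i ≤ (i : ℕ) := ginv_of_inv hinv
  have hrepe' : repeats e' = repeats (gammaSeq e') := repeats_gamma hm e' hinv hlast'
  have hge' : ∀ i : Fin (n - 1), ∀ hi : (i : ℕ) < n - 2,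
      gammaSeq (psiMap n k e') i = gammaSeq e' ⟨(i : ℕ), by omega⟩ := by
    intro i hi
    have h3 : ((Fin.castLE (Nat.sub_le n 1) i : Fin n) : ℕ) < n - 2 := hi
    exact psi_lo e' (Fin.castLE (Nat.sub_le n 1) i) h3
  have main : Av001 (gammaSeq (psiMap n k e')) ∧ k ∈ repeats (gammaSeq (psiMap n k e')) ∧
      (∀ v ∈ repeats (gammaSeq (psiMap n k e')), k ≤ v) := by
    by_cases hcase : (repeats (gammaSeq e')).Nonempty
    · have hr : k ≤ sInf (repeats (gammaSeq e')) := by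
        have h4 := srpt_eq_sInf e' (by rw [hrepe']; exact hcase)
        rw [hrepe'] at h4; omega
      have hAv : Av001 (gammaSeq (psiMap n k e')) := by
        rintro ⟨i, j, l, hij, hjl, hvv, hlt⟩
        have hij' : (i : ℕ) < (j : ℕ) := hij
        have hjl' : (j : ℕ) < (l : ℕ) := hjl
        have hlm : (l : ℕ) ≤ n - 2 := by have := l.isLt; omega
        by_cases hl2 : (l : ℕ) = n - 2
        · have hle : l = (⟨n - 2, by omega⟩ : Fin (n - 1)) := Fin.ext hl2
          have hlk : gammaSeq (psiMap n k e') l = k := by rw [hle]; exact hg2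
          have hji : (j : ℕ) < n - 2 := by omega
          have hii : (i : ℕ) < n - 2 := by omega
          have hvj2 : gammaSeq (psiMap n k e') j < (j : ℕ) := by
            have h5 := hginv i; omega
          have hvrep : gammaSeq (psiMap n k e') j ∈ repeats (gammaSeq e') :=
            (repeats_iff hhinv hhav).2 ⟨⟨(j : ℕ), by omega⟩, (hge' j hji).symm,
              by simpa using hvj2⟩
          have h6 := Nat.sInf_le hvrep
          omega
        · have hli : (l : ℕ) < n - 2 := by omega
          have hji : (j : ℕ) < n - 2 := by omega
          have hii : (i : ℕ) < n - 2 := by omega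
          apply hhav
          refine ⟨⟨(i : ℕ), by omega⟩, ⟨(j : ℕ), by omega⟩, ⟨(l : ℕ), by omega⟩,
            ?_, ?_, ?_, ?_⟩
          · exact hij'
          · exact hjl'
          · exact (hge' i hii).symm.trans (hvv.trans (hge' j hji))
          · exact lt_of_le_of_lt (le_of_eq (hge' j hji).symm)
              (lt_of_lt_of_le hlt (le_of_eq (hge' l hli)))
      refine ⟨hAv, ?_, ?_⟩
      · have hk2 : k < n - 2 := by omega
        have hgk : gammaSeq (psiMap n k e') ⟨k, by omega⟩ = k :=
          (hge' ⟨k, by omega⟩ hk2).trans (prefix_id hhinv hhav hr (by omega))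
        refine ⟨⟨k, by omega⟩, ⟨n - 2, by omega⟩, ?_, hgk, hg2⟩
        intro hc
        have : k = n - 2 := by simpa [Fin.ext_iff] using hc
        omega
      · intro v hv
        obtain ⟨j, hj, hvj⟩ := (repeats_iff hginv hAv).1 hv
        by_cases hj2 : (j : ℕ) = n - 2
        · have hje : j = (⟨n - 2, by omega⟩ : Fin (n - 1)) := Fin.ext hj2
          have h6 : gammaSeq (psiMap n k e') j = k := by rw [hje]; exact hg2
          omega
        · have hji : (j : ℕ) < n - 2 := by have := j.isLt; omega
          have hvrep : v ∈ repeats (gammaSeq e') :=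
            (repeats_iff hhinv hhav).2 ⟨⟨(j : ℕ), by omega⟩,
              (hge' j hji).symm.trans hj, by simpa using hvj⟩
          have := Nat.sInf_le hvrep
          omega
    · have hid : ∀ i : Fin (n - 1 - 1), gammaSeq e' i = (i : ℕ) :=
        id_of_no_repeats hhinv hhav hcase
      have hgid : ∀ i : Fin (n - 1), ∀ hi : (i : ℕ) < n - 2, gammaSeq (psiMap n k e') i = (i : ℕ) := by
        intro i hi
        exact (hge' i hi).trans (by simpa using hid ⟨(i : ℕ), by omega⟩)
      have hAv : Av001 (gammaSeq (psiMap n k e')) := by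
        rintro ⟨i, j, l, hij, hjl, hvv, hlt⟩
        have hij' : (i : ℕ) < (j : ℕ) := hij
        have hjl' : (j : ℕ) < (l : ℕ) := hjl
        have hji : (j : ℕ) < n - 2 := by have := l.isLt; omega
        have hii : (i : ℕ) < n - 2 := by omega
        rw [hgid i hii, hgid j hji] at hvv
        omega
      refine ⟨hAv, ?_, ?_⟩
      · have hk2 : k < n - 2 := by omega
        have hgk : gammaSeq (psiMap n k e') ⟨k, by omega⟩ = k := by
          have := hgid ⟨k, by omega⟩ (by simpa using hk2)
          simpa using this
        refine ⟨⟨k, by omega⟩, ⟨n - 2, by omega⟩, ?_, hgk, hg2⟩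
        intro hc
        have : k = n - 2 := by simpa [Fin.ext_iff] using hc
        omega
      · intro v hv
        obtain ⟨j, hj, hvj⟩ := (repeats_iff hginv hAv).1 hv
        by_cases hj2 : (j : ℕ) = n - 2
        · have hje : j = (⟨n - 2, by omega⟩ : Fin (n - 1)) := Fin.ext hj2
          have h6 : gammaSeq (psiMap n k e') j = k := by rw [hje]; exact hg2
          omega
        · have hji : (j : ℕ) < n - 2 := by have := j.isLt; omega
          rw [hgid j hji] at hj
          omega
  obtain ⟨hAv, hkmem, hlow⟩ := main
  have hrepE : repeats (psiMap n k e') = repeats (gammaSeq (psiMap n k e')) :=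
    repeats_gamma hn (psiMap n k e') hEinv hElastv
  have hEav : Avoids0012 (psiMap n k e') := (avoids_iff_gamma hn (psiMap n k e') hEinv hElastv).2 hAv
  have hsE : srpt (psiMap n k e') = k := by
    have h1 : (repeats (psiMap n k e')).Nonempty := by rw [hrepE]; exact ⟨k, hkmem⟩
    rw [srpt_eq_sInf _ h1, hrepE]
    exact le_antisymm (Nat.sInf_le hkmem) (le_csInf ⟨k, hkmem⟩ hlow)
  refine ⟨psiMap n k e', hEinv, hEav, hsE, hElast, ?_⟩
  funext i
  unfold phiMap
  by_cases h2 : (i : ℕ) = n - 2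
  · rw [if_pos h2]
    have hie : i = (⟨n - 1 - 1, by omega⟩ : Fin (n - 1)) := Fin.ext (show (i:ℕ) = n - 1 - 1 by omega)
    have h4 : e' i = n - 1 - 1 := by rw [hie]; exact hlast'
    omega
  · rw [if_neg h2]
    have hi2 : ((Fin.castLE (Nat.sub_le n 1) i : Fin n) : ℕ) < n - 2 := by
      have := i.isLt
      simp only [Fin.coe_castLE]
      omega
    exact (psi_lo e' (Fin.castLE (Nat.sub_le n 1) i) hi2).trans
      (congrArg e' (Fin.ext rfl))

lemma lemInj {n k : ℕ} (hk : k + 3 ≤ n) : Set.InjOn (phiMap n)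
    {e : Fin n → ℕ | e ∈ InvSeq0012 n ∧ srpt e = k ∧ lastEntry e = n - 1} := by
  intro e he e2 he2 hΦ
  obtain ⟨_, _, _, hmid⟩ := lemA hk e he.1.1 he.1.2 he.2.1 he.2.2
  obtain ⟨_, _, _, hmid2⟩ := lemA hk e2 he2.1.1 he2.1.2 he2.2.1 he2.2.2
  have hl : e ⟨n - 1, by omega⟩ = n - 1 := by
    rw [← lastEntry_eq (by omega) e]; exact he.2.2
  have hl2 : e2 ⟨n - 1, by omega⟩ = n - 1 := by
    rw [← lastEntry_eq (by omega) e2]; exact he2.2.2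
  funext i
  by_cases h1 : (i : ℕ) = n - 1
  · have hie : i = (⟨n - 1, by omega⟩ : Fin n) := Fin.ext h1
    rw [hie]
    exact hl.trans hl2.symm
  · by_cases h2 : (i : ℕ) = n - 2
    · have hie : i = (⟨n - 2, by omega⟩ : Fin n) := Fin.ext h2
      rw [hie]
      exact hmid.trans hmid2.symm
    · have hi : (i : ℕ) < n - 2 := by have := i.isLt; omega
      have k1 : phiMap n e ⟨(i : ℕ), by omega⟩ = e i := by
        unfold phiMap
        rw [if_neg h2]
        exact congrArg e (Fin.ext rfl)
      have k2 : phiMap n e2 ⟨(i : ℕ), by omega⟩ = e2 i := by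
        unfold phiMap
        rw [if_neg h2]
        exact congrArg e2 (Fin.ext rfl)
      exact k1.symm.trans ((congrFun hΦ ⟨(i : ℕ), by omega⟩).trans k2)

/-- For `n ≥ 2` and `0 ≤ k ≤ n - 3`,
`f n k (n-1) = ∑_{k'=k}^{n-2} f (n-1) k' (n-2)`. -/
theorem stmt9 (n k : ℕ) (hn : 2 ≤ n) (hk : k + 3 ≤ n) :
    f n k (n - 1) = ∑ k' ∈ Finset.Icc k (n - 2), f (n - 1) k' (n - 2) := by
  have hn3 : 3 ≤ n := by omega
  set A : Set (Fin n → ℕ) := {e | e ∈ InvSeq0012 n ∧ srpt e = k ∧ lastEntry e = n - 1} with hA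
  set B : Set (Fin (n - 1) → ℕ) :=
    {e | e ∈ InvSeq0012 (n - 1) ∧ lastEntry e = n - 2 ∧ srpt e ∈ Finset.Icc k (n - 2)} with hB
  have hBfin : B.Finite := Set.Finite.subset (finite_inv (n - 1)) (fun e he => he.1.1)
  have himg : phiMap n '' A = B := by
    apply Set.Subset.antisymm
    · rintro _ ⟨e, he, rfl⟩
      obtain ⟨h1, h2, h3, h4⟩ := lemFwd hk e he.1.1 he.1.2 he.2.1 he.2.2
      exact ⟨⟨h1, h2⟩, h3, h4⟩
    · intro e' he'
      have h5 := Finset.mem_Icc.1 he'.2.2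
      obtain ⟨E, hE1, hE2, hE3, hE4, hE5⟩ := lemSurj hk e' he'.1.1 he'.1.2 he'.2.1 h5.1 h5.2
      exact ⟨E, ⟨⟨hE1, hE2⟩, hE3, hE4⟩, hE5⟩
  have hinj : Set.InjOn (phiMap n) A := lemInj hk
  have hAcard : f n k (n - 1) = A.ncard := rfl
  have hswap : A.ncard = B.ncard := by rw [← himg, Set.ncard_image_of_injOn hinj]
  have h1 : B.ncard = hBfin.toFinset.card := Set.ncard_eq_toFinset_card B hBfin
  have h2 : hBfin.toFinset.card
      = ∑ k' ∈ Finset.Icc k (n - 2), (hBfin.toFinset.filter (fun e => srpt e = k')).card := by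
    apply Finset.card_eq_sum_card_fiberwise
    intro x hx
    exact ((hBfin.mem_toFinset).1 hx).2.2
  rw [hAcard, hswap, h1, h2]
  apply Finset.sum_congr rfl
  intro k' hk'
  have hSfin : Set.Finite {e : Fin (n - 1) → ℕ | e ∈ InvSeq0012 (n - 1) ∧ srpt e = k' ∧
      lastEntry e = n - 2} := Set.Finite.subset (finite_inv (n - 1)) (fun e he => he.1.1)
  have hfS : f (n - 1) k' (n - 2) = Set.ncard {e : Fin (n - 1) → ℕ | e ∈ InvSeq0012 (n - 1) ∧
      srpt e = k' ∧ lastEntry e = n - 2} := rfl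
  have heq : hBfin.toFinset.filter (fun e => srpt e = k') = hSfin.toFinset := by
    ext e
    simp only [Finset.mem_filter, Set.Finite.mem_toFinset, hB, Set.mem_setOf_eq]
    constructor
    · rintro ⟨⟨ha, hb, hc⟩, hd⟩; exact ⟨ha, hd, hb⟩
    · rintro ⟨ha, hb, hc⟩
      exact ⟨⟨ha, hc, by rw [hb]; exact hk'⟩, hb⟩
  rw [heq, hfS, Set.ncard_eq_toFinset_card _ hSfin]
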